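/- Let r₁,…,r_k be elements of {0,…,N}. (i) If r₁,…,r_k are pairwise distinct, then the probability that for every 1 ≤ i ≤ k−1 at least one of r_i, r_{i+1} does not belong to A equals a_k. (ii) If k ≥ 2, r₁,…,r_{k−1} are pairwise distinct and r_k = r_{k−1}, then the probability that for every 1 ≤ i ≤ k−1 at least one of r_i, r_{i+1} does not belong to A equals (1 − p)·a_{k−2}. -/

import Mathlib

open MeasureTheory Filter

/-- The Bernoulli(p) measure on `Bool`: `true` has probability `p`. -/
noncomputable def bern (p : ℝ) : Measure Bool :=
  ENNReal.ofReal p • Measure.dirac true + ENNReal.ofReal (1 - p) • Measure.dirac false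

/-- The law of a random subset of `{0, …, N}` where each element is included
independently with probability `p`, encoded by indicator functions. -/
noncomputable def prodBern (p : ℝ) (N : ℕ) : Measure (Fin (N + 1) → Bool) :=
  Measure.pi fun _ => bern p

/-- `n` belongs to the sumset `A + A`, where `A ⊆ {0,…,N}` is encoded by `ω`. -/
def inSumset {N : ℕ} (ω : Fin (N + 1) → Bool) (n : ℕ) : Prop :=
  ∃ a b : Fin (N + 1), ω a = true ∧ ω b = true ∧ (a : ℕ) + (b : ℕ) = n

/-- `Y`: the number of integers in `{0,…,N}` missing from `A + A`. -/
noncomputable def Ycount (N : ℕ) (ω : Fin (N + 1) → Bool) : ℕ :=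
  {n : ℕ | n ≤ N ∧ ¬ inSumset ω n}.ncard

/-- `Z`: the number of integers in `{N+1,…,2N}` missing from `A + A`. -/
noncomputable def Zcount (N : ℕ) (ω : Fin (N + 1) → Bool) : ℕ :=
  {n : ℕ | N + 1 ≤ n ∧ n ≤ 2 * N ∧ ¬ inSumset ω n}.ncard

/-- `W`: the number of integers in `{0,…,2N}` missing from `A + A`. -/
noncomputable def Wcount (N : ℕ) (ω : Fin (N + 1) → Bool) : ℕ :=
  {n : ℕ | n ≤ 2 * N ∧ ¬ inSumset ω n}.ncard

/-- `Ỹ`: the number of integers in `{0,…,⌊N/2⌋}` missing from `A + A`. -/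
noncomputable def Ytilde (N : ℕ) (ω : Fin (N + 1) → Bool) : ℕ :=
  {n : ℕ | n ≤ N / 2 ∧ ¬ inSumset ω n}.ncard

/-- `Z̃`: the number of integers in `{⌊3N/2⌋+1,…,2N}` missing from `A + A`. -/
noncomputable def Ztilde (N : ℕ) (ω : Fin (N + 1) → Bool) : ℕ :=
  {n : ℕ | 3 * N / 2 + 1 ≤ n ∧ n ≤ 2 * N ∧ ¬ inSumset ω n}.ncard

/-- A string of `k` bits has no two consecutive ones. -/
def noTwoOnes {k : ℕ} (x : Fin k → Bool) : Prop :=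
  ∀ i : ℕ, ∀ hi : i + 1 < k, ¬(x ⟨i, Nat.lt_of_succ_lt hi⟩ = true ∧ x ⟨i + 1, hi⟩ = true)

/-- `a_k`: the probability that `k` i.i.d. Bernoulli(p) bits contain no two
consecutive 1's (with `a_0 = 1`). -/
noncomputable def aseq (p : ℝ) (k : ℕ) : ℝ :=
  ((Measure.pi fun _ : Fin k => bern p) {x | noTwoOnes x}).toReal

section Aux
open MeasureTheory

lemma bern_prob {p : ℝ} (hp0 : 0 ≤ p) (hp1 : p ≤ 1) : IsProbabilityMeasure (bern p) := by
  constructor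
  simp [bern, Measure.add_apply]
  rw [← ENNReal.ofReal_add hp0 (by linarith)]
  norm_num

lemma bern_false (p : ℝ) : bern p {false} = ENNReal.ofReal (1 - p) := by
  simp [bern, Measure.add_apply]

lemma allMeas {α : Type*} [MeasurableSpace α] [MeasurableSingletonClass α] [Finite α]
    (S : Set α) : MeasurableSet S :=
  (Set.toFinite S).measurableSet

lemma marginal {n k : ℕ} (μ : Measure Bool) [IsProbabilityMeasure μ]
    {g : Fin k → Fin n} (hg : Function.Injective g) :
    Measure.map (fun ω : Fin n → Bool => ω ∘ g) (Measure.pi fun _ : Fin n => μ)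
      = Measure.pi fun _ : Fin k => μ := by
  classical
  set p : Fin n → Prop := fun i => i ∈ Set.range g with hp
  set e : Fin k ≃ {i // p i} := Equiv.ofInjective g hg
  have h1 := measurePreserving_piEquivPiSubtypeProd (fun _ : Fin n => μ) p
  have h2 := measurePreserving_piCongrLeft (fun _ : Fin k => μ) e.symm
  have mp1 : MeasurePreserving (Prod.fst : ((Subtype p → Bool) × ({i // ¬ p i} → Bool)) → _)
      ((Measure.pi fun _ : Subtype p => μ).prod (Measure.pi fun _ : {i // ¬ p i} => μ))
      (Measure.pi fun _ : Subtype p => μ) := by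
    constructor
    · exact measurable_fst
    · rw [Measure.map_fst_prod]; simp
  have h2' : MeasurePreserving (⇑(MeasurableEquiv.piCongrLeft (fun _ : Fin k => Bool) e.symm))
      (Measure.pi fun _ : Subtype p => μ) (Measure.pi fun _ : Fin k => μ) := by
    convert h2 using 2
  have h1' : MeasurePreserving (⇑(MeasurableEquiv.piEquivPiSubtypeProd (fun _ : Fin n => Bool) p))
      (Measure.pi fun _ : Fin n => μ)
      ((Measure.pi fun _ : Subtype p => μ).prod (Measure.pi fun _ : {i // ¬ p i} => μ)) := by
    convert h1 using 3
  have total := (h2'.comp mp1).comp h1'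
  have key : (fun ω : Fin n → Bool => ω ∘ g) =
      (MeasurableEquiv.piCongrLeft (fun _ : Fin k => Bool) e.symm) ∘
      (Prod.fst) ∘ (MeasurableEquiv.piEquivPiSubtypeProd (fun _ : Fin n => Bool) p) := by
    funext ω
    funext j
    have h3 : (e.symm) (e j) = j := e.symm_apply_apply j
    simp [MeasurableEquiv.piEquivPiSubtypeProd, MeasurableEquiv.coe_piCongrLeft]
    rw [Equiv.piCongrLeft_apply_eq_cast]
    simp [e]
    rfl
  rw [key]
  exact total.map_eq

lemma measurable_comp_right {n k : ℕ} (g : Fin k → Fin n) :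
    Measurable (fun ω : Fin n → Bool => ω ∘ g) :=
  measurable_pi_lambda _ fun j => measurable_pi_apply _

end Aux

/-- (i) A loopless chain `r₁,…,r_k` of distinct elements of `{0,…,N}` is
satisfied with probability `a_k`; (ii) a looped chain (`r_k = r_{k-1}`,
otherwise distinct) is satisfied with probability `(1-p)·a_{k-2}`. -/
theorem stmt5 (p : ℝ) (hp0 : 0 < p) (hp1 : p < 1) (N k : ℕ) (r : Fin k → Fin (N + 1)) :
    (Function.Injective r →
      (prodBern p N {ω | ∀ i : ℕ, ∀ hi : i + 1 < k,
          ω (r ⟨i, Nat.lt_of_succ_lt hi⟩) = false ∨ ω (r ⟨i + 1, hi⟩) = false}).toReal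
        = aseq p k) ∧
    (∀ hk : 2 ≤ k,
      (∀ i j : Fin k, (i : ℕ) < k - 1 → (j : ℕ) < k - 1 → r i = r j → i = j) →
      r ⟨k - 1, by omega⟩ = r ⟨k - 2, by omega⟩ →
      (prodBern p N {ω | ∀ i : ℕ, ∀ hi : i + 1 < k,
          ω (r ⟨i, Nat.lt_of_succ_lt hi⟩) = false ∨ ω (r ⟨i + 1, hi⟩) = false}).toReal
        = (1 - p) * aseq p (k - 2)) := by
  classical
  have hbp : IsProbabilityMeasure (bern p) := bern_prob hp0.le hp1.le
  constructor
  · intro hr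
    have hset : {ω : Fin (N + 1) → Bool | ∀ i : ℕ, ∀ hi : i + 1 < k,
          ω (r ⟨i, Nat.lt_of_succ_lt hi⟩) = false ∨ ω (r ⟨i + 1, hi⟩) = false}
        = (fun ω : Fin (N + 1) → Bool => ω ∘ r) ⁻¹' {x | noTwoOnes x} := by
      ext ω
      simp only [Set.mem_setOf_eq, Set.mem_preimage, noTwoOnes, Function.comp_apply]
      constructor
      · intro h i hi
        rcases h i hi with h' | h' <;> simp [h']
      · intro h i hi
        have := h i hi
        rw [not_and_or, Bool.not_eq_true, Bool.not_eq_true] at this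
        exact this
    rw [prodBern, hset, ← Measure.map_apply (measurable_comp_right r) (allMeas _),
      marginal (bern p) hr, aseq]
  · intro hk hinj hloop
    obtain ⟨m, rfl⟩ : ∃ m, k = m + 2 := ⟨k - 2, by omega⟩
    have hginj : Function.Injective
        (fun j : Fin (m + 1) => r ⟨j.val, Nat.lt_succ_of_lt j.isLt⟩) := by
      intro i j hij
      have h5 := hinj ⟨i.val, Nat.lt_succ_of_lt i.isLt⟩ ⟨j.val, Nat.lt_succ_of_lt j.isLt⟩
        (by simp; exact Nat.le_of_lt_succ i.isLt) (by simp; exact Nat.le_of_lt_succ j.isLt) hij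
      apply Fin.ext
      have h6 := congrArg Fin.val h5
      simpa using h6
    have hloop' : r ⟨m + 1, by omega⟩ = r ⟨m, by omega⟩ := hloop
    have hset : {ω : Fin (N + 1) → Bool | ∀ i : ℕ, ∀ hi : i + 1 < m + 2,
          ω (r ⟨i, Nat.lt_of_succ_lt hi⟩) = false ∨ ω (r ⟨i + 1, hi⟩) = false}
        = (fun ω : Fin (N + 1) → Bool =>
            ω ∘ (fun j : Fin (m + 1) => r ⟨j.val, Nat.lt_succ_of_lt j.isLt⟩)) ⁻¹'
          {x | x (Fin.last m) = false ∧ noTwoOnes (fun j : Fin m => x j.castSucc)} := by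
      ext ω
      simp only [Set.mem_setOf_eq, Set.mem_preimage, noTwoOnes, Function.comp_apply,
        Fin.castSucc_mk, Fin.val_mk, Fin.last]
      constructor
      · intro h
        have hlastv : ω (r ⟨m, by omega⟩) = false := by
          rcases h m (by omega) with h' | h'
          · exact h'
          · rw [hloop'] at h'; exact h'
        refine ⟨hlastv, ?_⟩
        intro i hi
        have h0 := h i (by omega)
        rcases h0 with h' | h' <;> simp [h']
      · rintro ⟨hx1, hx2⟩ i hi2
        have hx1' : ω (r ⟨m, by omega⟩) = false := hx1
        by_cases hc : i + 1 < m
        · have h2 := hx2 i hc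
          cases hA : ω (r ⟨i, Nat.lt_of_succ_lt hi2⟩) with
          | false => exact Or.inl rfl
          | true =>
            cases hB : ω (r ⟨i + 1, hi2⟩) with
            | false => exact Or.inr rfl
            | true => exact absurd ⟨hA, hB⟩ h2
        · by_cases hc2 : i = m + 1
          · subst hc2
            left
            have he : (⟨m + 1, Nat.lt_of_succ_lt hi2⟩ : Fin (m + 2)) = ⟨m + 1, by omega⟩ := rfl
            rw [he, hloop']
            exact hx1'
          · by_cases hc3 : i = m
            · subst hc3
              left
              exact hx1'
            · right
              have he : (⟨i + 1, hi2⟩ : Fin (m + 2)) = ⟨m, by omega⟩ := by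
                apply Fin.ext; simp; omega
              rw [he]
              exact hx1'
    rw [prodBern, hset, ← Measure.map_apply (measurable_comp_right _) (allMeas _),
      marginal (bern p) hginj]
    have hpres := measurePreserving_piFinSuccAbove (fun _ : Fin (m + 1) => bern p) (Fin.last m)
    have hT2 : {x : Fin (m + 1) → Bool |
          x (Fin.last m) = false ∧ noTwoOnes (fun j : Fin m => x j.castSucc)}
        = (MeasurableEquiv.piFinSuccAbove (fun _ : Fin (m + 1) => Bool) (Fin.last m)) ⁻¹'
          ({false} ×ˢ {x : Fin m → Bool | noTwoOnes x}) := by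
      ext x
      simp [MeasurableEquiv.piFinSuccAbove, Fin.removeNth, Fin.succAbove_last]
      exact fun _ => Iff.rfl
    rw [hT2, hpres.measure_preimage (allMeas _).nullMeasurableSet, Measure.prod_prod,
      bern_false, ENNReal.toReal_mul, ENNReal.toReal_ofReal (by linarith)]
    congr 1
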